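/- Let Y = (Y_1,…,Y_k) be any k points in ℝ^d and let Y' = (Y_1,…,Y_{i−1}, Y_i', Y_{i+1},…,Y_k) be the same points with the i-th point replaced by an arbitrary Y_i' ∈ ℝ^d. Fix x ∈ ℝ^d and r > 0, and let m and m' be the optimal values of MT(x,r,Y) and MT(x,r,Y') respectively. Then |m − m'| ≤ 1. -/

import Mathlib

noncomputable section

/-- The index type of the MT semidefinite program: a distinguished index `1` (`Sum.inl ()`),
indices `b i` for `i : Fin k` (`Sum.inr (Sum.inl i)`) and indices `v j` for `j : Fin D`
(`Sum.inr (Sum.inr j)`). -/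
abbrev MTIdx (k D : ℕ) := Unit ⊕ Fin k ⊕ Fin D

/-- The distinguished index `1`. -/
abbrev idx1 {k D : ℕ} : MTIdx k D := Sum.inl ()

/-- The index `b i`. -/
abbrev idxb {k D : ℕ} (i : Fin k) : MTIdx k D := Sum.inr (Sum.inl i)

/-- The index `v j`. -/
abbrev idxv {k D : ℕ} (j : Fin D) : MTIdx k D := Sum.inr (Sum.inr j)

/-- A real symmetric `(1+k+D) × (1+k+D)` matrix `X` is `MT(x, r, Z)`-feasible if it is positive
semidefinite, `X_{1,1} = 1`, `X_{1,b_i} = X_{b_i,b_i}`, `∑ j, X_{v_j,v_j} = 1` and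
`⟨v_{b_i}, Z_i − x⟩ ≥ X_{b_i,b_i}·r` for all `i`, where `v_{b_i} = (X_{b_i,v_1},…,X_{b_i,v_D})`. -/
def MTFeasible {k D : ℕ} (Z : Fin k → EuclideanSpace ℝ (Fin D))
    (x : EuclideanSpace ℝ (Fin D)) (r : ℝ)
    (X : Matrix (MTIdx k D) (MTIdx k D) ℝ) : Prop :=
  X.PosSemidef ∧
  X idx1 idx1 = 1 ∧
  (∀ i : Fin k, X idx1 (idxb i) = X (idxb i) (idxb i)) ∧
  (∑ j : Fin D, X (idxv j) (idxv j) = 1) ∧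
  (∀ i : Fin k, X (idxb i) (idxb i) * r ≤ ∑ j : Fin D, X (idxb i) (idxv j) * (Z i - x) j)

/-- The objective `∑ i, X_{1, b_i}` of the MT semidefinite program. -/
def MTobj {k D : ℕ} (X : Matrix (MTIdx k D) (MTIdx k D) ℝ) : ℝ :=
  ∑ i : Fin k, X idx1 (idxb i)

/-- The sum of diagonal entries `∑ i, X_{b_i, b_i}`. -/
def MTdiag {k D : ℕ} (X : Matrix (MTIdx k D) (MTIdx k D) ℝ) : ℝ :=
  ∑ i : Fin k, X (idxb i) (idxb i)

/-- The optimal value of `MT(x, r, Z)`: the supremum of `∑ i, X_{1,b_i}` over feasible `X`. -/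
def MTval {k D : ℕ} (Z : Fin k → EuclideanSpace ℝ (Fin D))
    (x : EuclideanSpace ℝ (Fin D)) (r : ℝ) : ℝ :=
  sSup {s : ℝ | ∃ X : Matrix (MTIdx k D) (MTIdx k D) ℝ, MTFeasible Z x r X ∧ s = MTobj X}

-- entry bounds
lemma MT_entry_bounds {k D : ℕ} {Z : Fin k → EuclideanSpace ℝ (Fin D)}
    {x : EuclideanSpace ℝ (Fin D)} {r : ℝ} {X : Matrix (MTIdx k D) (MTIdx k D) ℝ}
    (hX : MTFeasible Z x r X) (j : Fin k) :
    0 ≤ X idx1 (idxb j) ∧ X idx1 (idxb j) ≤ 1 := by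
  set c := X idx1 (idxb j) with hc
  have hsym : X (idxb j) idx1 = c := by
    have h2 : X (idxb j) idx1 = X idx1 (idxb j) := by
      simpa using hX.1.1.apply idx1 (idxb j)
    rw [hc]; exact h2
  have hdiag : X (idxb j) (idxb j) = c := (hX.2.2.1 j).symm
  have h11 : X idx1 idx1 = 1 := hX.2.1
  have hq : ∀ t : ℝ, 0 ≤ t ^ 2 + 2 * t * c + c := by
    intro t
    have hsub := hX.1.submatrix (![idx1, idxb j] : Fin 2 → MTIdx k D)
    have h := hsub.dotProduct_mulVec_nonneg (fun a => t * (Pi.single 0 1 : Fin 2 → ℝ) a + (Pi.single 1 1 : Fin 2 → ℝ) a)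
    simp [Matrix.mulVec, dotProduct, Pi.single_apply, Fin.sum_univ_two, mul_add,
      add_mul, Matrix.submatrix, h11, hsym, hdiag, ← hc] at h
    nlinarith [h]
  have h0 : 0 ≤ c := by simpa using hq 0
  have h1 : c ≤ 1 := by nlinarith [hq (-c)]
  exact ⟨h0, h1⟩

lemma MT_transfer {k D : ℕ} {Z Z' : Fin k → EuclideanSpace ℝ (Fin D)} {i : Fin k}
    (h : ∀ j, j ≠ i → Z' j = Z j) {x : EuclideanSpace ℝ (Fin D)} {r : ℝ}
    {X : Matrix (MTIdx k D) (MTIdx k D) ℝ} (hX : MTFeasible Z x r X) :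
    ∃ X' : Matrix (MTIdx k D) (MTIdx k D) ℝ,
      MTFeasible Z' x r X' ∧ MTobj X - 1 ≤ MTobj X' := by
  classical
  set d : MTIdx k D → ℝ := fun a => if a = idxb i then 0 else 1 with hd
  set X' : Matrix (MTIdx k D) (MTIdx k D) ℝ := Matrix.diagonal d * X * Matrix.diagonal d with hX'
  have hE : ∀ a b, X' a b = d a * X a b * d b := by
    intro a b
    rw [hX', Matrix.mul_diagonal, Matrix.diagonal_mul]
  have d1 : d idx1 = 1 := by simp [hd]
  have dv : ∀ j, d (idxv j) = 1 := by intro j; simp [hd]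
  have db : ∀ j : Fin k, d (idxb j) = if j = i then 0 else 1 := by
    intro j; simp [hd]
  have hpsd : X'.PosSemidef := by
    have h := hX.1.mul_mul_conjTranspose_same (Matrix.diagonal d)
    have hstar : (Matrix.diagonal d).conjTranspose = Matrix.diagonal d := by
      simp [Matrix.diagonal_conjTranspose]
    rw [hstar] at h
    exact h
  refine ⟨X', ⟨hpsd, ?_, ?_, ?_, ?_⟩, ?_⟩
  · rw [hE, d1, hX.2.1]; ring
  · intro j
    rw [hE, hE, d1, db]
    by_cases hji : j = i
    · simp [hji]
    · simp [hji, hX.2.2.1 j]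
  · have : ∀ j : Fin D, X' (idxv j) (idxv j) = X (idxv j) (idxv j) := by
      intro j; rw [hE, dv]; ring
    rw [Finset.sum_congr rfl fun j _ => this j]
    exact hX.2.2.2.1
  · intro j
    by_cases hji : j = i
    · subst hji
      have hz : X' (idxb j) (idxb j) = 0 := by rw [hE, db]; simp
      have hz2 : ∀ j' : Fin D, X' (idxb j) (idxv j') = 0 := by
        intro j'; rw [hE, db]; simp
      rw [hz]
      simp [hz2]
    · have hb : d (idxb j) = 1 := by rw [db]; simp [hji]
      have e1 : X' (idxb j) (idxb j) = X (idxb j) (idxb j) := by rw [hE, hb]; ring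
      have e2 : ∀ j' : Fin D, X' (idxb j) (idxv j') = X (idxb j) (idxv j') := by
        intro j'; rw [hE, hb, dv]; ring
      rw [e1, Finset.sum_congr rfl fun j' _ => by rw [e2 j'], h j hji]
      exact hX.2.2.2.2 j
  · have hobj : ∀ j : Fin k, X' idx1 (idxb j)
        = X idx1 (idxb j) - (if j = i then X idx1 (idxb j) else 0) := by
      intro j
      rw [hE, d1, db]
      by_cases hji : j = i <;> simp [hji]
    have : MTobj X' = MTobj X - X idx1 (idxb i) := by
      unfold MTobj
      rw [Finset.sum_congr rfl fun j _ => hobj j, Finset.sum_sub_distrib,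
        Finset.sum_ite_eq' Finset.univ i]
      simp
    rw [this]
    have := (MT_entry_bounds hX i).2
    linarith

lemma MT_obj_bounds {k D : ℕ} {Z : Fin k → EuclideanSpace ℝ (Fin D)}
    {x : EuclideanSpace ℝ (Fin D)} {r : ℝ} {X : Matrix (MTIdx k D) (MTIdx k D) ℝ}
    (hX : MTFeasible Z x r X) : 0 ≤ MTobj X ∧ MTobj X ≤ k := by
  constructor
  · exact Finset.sum_nonneg fun j _ => (MT_entry_bounds hX j).1
  · calc MTobj X ≤ ∑ _j : Fin k, (1 : ℝ) :=
          Finset.sum_le_sum fun j _ => (MT_entry_bounds hX j).2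
      _ = k := by simp

lemma MTval_le {k D : ℕ} {Z Z' : Fin k → EuclideanSpace ℝ (Fin D)} {i : Fin k}
    (h : ∀ j, j ≠ i → Z' j = Z j) (x : EuclideanSpace ℝ (Fin D)) (r : ℝ) :
    MTval Z x r ≤ MTval Z' x r + 1 := by
  classical
  set S' : Set ℝ := {s : ℝ | ∃ X : Matrix (MTIdx k D) (MTIdx k D) ℝ,
    MTFeasible Z' x r X ∧ s = MTobj X} with hS'
  have hbdd' : BddAbove S' := by
    refine ⟨k, fun s hs => ?_⟩
    obtain ⟨X, hXf, rfl⟩ := hs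
    exact (MT_obj_bounds hXf).2
  have hsup_nonneg : S'.Nonempty → (0 : ℝ) ≤ sSup S' := by
    rintro ⟨s, hs⟩
    obtain ⟨X, hXf, rfl⟩ := hs
    exact le_trans (MT_obj_bounds hXf).1 (le_csSup hbdd' ⟨X, hXf, rfl⟩)
  unfold MTval
  by_cases hS : {s : ℝ | ∃ X : Matrix (MTIdx k D) (MTIdx k D) ℝ,
      MTFeasible Z x r X ∧ s = MTobj X}.Nonempty
  · have hne' : S'.Nonempty := by
      obtain ⟨s, X, hXf, rfl⟩ := hS
      obtain ⟨X', hX'f, _⟩ := MT_transfer h hXf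
      exact ⟨MTobj X', X', hX'f, rfl⟩
    refine Real.sSup_le ?_ (by linarith [hsup_nonneg hne'])
    rintro s ⟨X, hXf, rfl⟩
    obtain ⟨X', hX'f, hle⟩ := MT_transfer h hXf
    have : MTobj X' ≤ sSup S' := le_csSup hbdd' ⟨X', hX'f, rfl⟩
    linarith
  · rw [Set.not_nonempty_iff_eq_empty.mp hS, Real.sSup_empty]
    by_cases hS2 : S'.Nonempty
    · linarith [hsup_nonneg hS2]
    · rw [show {s : ℝ | ∃ X : Matrix (MTIdx k D) (MTIdx k D) ℝ,
          MTFeasible Z' x r X ∧ s = MTobj X} = (∅ : Set ℝ) from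
          Set.not_nonempty_iff_eq_empty.mp hS2, Real.sSup_empty]
      norm_num

theorem stmt8 {k D : ℕ} (Y : Fin k → EuclideanSpace ℝ (Fin D))
    (i : Fin k) (Yi' : EuclideanSpace ℝ (Fin D))
    (Y' : Fin k → EuclideanSpace ℝ (Fin D)) (hY' : Y' = Function.update Y i Yi')
    (x : EuclideanSpace ℝ (Fin D)) (r : ℝ) (hr : 0 < r)
    (m m' : ℝ) (hm : m = MTval Y x r) (hm' : m' = MTval Y' x r) :
    |m - m'| ≤ 1 := by
  have h1 : ∀ j, j ≠ i → Y' j = Y j := by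
    intro j hj; rw [hY', Function.update_of_ne hj]
  have h2 : ∀ j, j ≠ i → Y j = Y' j := fun j hj => (h1 j hj).symm
  have ha := MTval_le h1 x r
  have hb := MTval_le h2 x r
  rw [abs_sub_le_iff]
  constructor <;> [skip; skip] <;> rw [hm, hm'] <;> linarith
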